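/- Let A be a finite set of agents and a ∈ A. The formula (⋀_{b ∈ A\{a}} (□_b p ∧ C□_b p ∧ □_b □_a p ∧ C□_b □_a p) ∧ □_a p) → Cp is valid on all frames where every accessibility relation is serial and transitive, but is not valid on all frames where every accessibility relation is serial. Hence CKD4 ∩ C_alt is not contained in CKD ∩ C_alt. -/

import Mathlib

/-- Formulas of the multi-agent modal language with common belief. -/
inductive CFm (A : Type) : Type
  | atom : ℕ → CFm A
  | neg : CFm A → CFm A
  | and : CFm A → CFm A → CFm A
  | box : A → CFm A → CFm A
  | cb : CFm A → CFm A

namespace CFm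
def imp {A : Type} (φ ψ : CFm A) : CFm A := .neg (.and φ (.neg ψ))
def or {A : Type} (φ ψ : CFm A) : CFm A := .neg (.and (.neg φ) (.neg ψ))
def dia {A : Type} (a : A) (φ : CFm A) : CFm A := .neg (.box a (.neg φ))
def cdual {A : Type} (φ : CFm A) : CFm A := .neg (.cb (.neg φ))
def bot {A : Type} : CFm A := .and (.atom 0) (.neg (.atom 0))
def verum {A : Type} : CFm A := .neg bot
def conj {A : Type} (l : List (CFm A)) : CFm A := l.foldr .and verum
end CFm

structure Kripke (A W : Type) where
  R : A → W → W → Prop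
  V : ℕ → W → Prop

def Ser {W : Type} (R : W → W → Prop) : Prop := ∀ u, ∃ v, R u v
def Eucl {W : Type} (R : W → W → Prop) : Prop := ∀ u v w, R u v → R u w → R v w

/-- Satisfaction; Cφ holds at u iff φ holds at all worlds reachable from u by the
transitive closure of the union of the accessibility relations. -/
def CSat {A W : Type} (M : Kripke A W) : W → CFm A → Prop
  | w, .atom n => M.V n w
  | w, .neg φ => ¬ CSat M w φ
  | w, .and φ ψ => CSat M w φ ∧ CSat M w ψ
  | w, .box a φ => ∀ v, M.R a w v → CSat M v φ
  | w, .cb φ => ∀ v, Relation.TransGen (fun x y => ∃ a : A, M.R a x y) w v → CSat M v φ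

/-- Formulas whose only modality is C. -/
inductive Conly {A : Type} : CFm A → Prop
  | atom (n : ℕ) : Conly (.atom n)
  | neg {φ : CFm A} : Conly φ → Conly (.neg φ)
  | and {φ ψ : CFm A} : Conly φ → Conly ψ → Conly (.and φ ψ)
  | cb {φ : CFm A} : Conly φ → Conly (.cb φ)

/-- C-free agent-alternating fragments L_{-a} (within the C language). -/
inductive PLMinus {A : Type} : A → CFm A → Prop
  | atom (a : A) (n : ℕ) : PLMinus a (.atom n)
  | box {a x : A} {ψ : CFm A} : x ≠ a → PLMinus x ψ → PLMinus a (.box x ψ)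
  | neg {a : A} {φ : CFm A} : PLMinus a φ → PLMinus a (.neg φ)
  | and {a : A} {φ ψ : CFm A} : PLMinus a φ → PLMinus a ψ → PLMinus a (.and φ ψ)

/-- C-free agent-alternating fragment L_alt (within the C language). -/
inductive PLAlt {A : Type} : CFm A → Prop
  | atom (n : ℕ) : PLAlt (.atom n)
  | chi {φ : CFm A} (a : A) : PLMinus a φ → PLAlt φ
  | neg {φ : CFm A} : PLAlt φ → PLAlt (.neg φ)
  | and {φ ψ : CFm A} : PLAlt φ → PLAlt ψ → PLAlt (.and φ ψ)

/-- L_alt C^p: Boolean combinations of agent-alternating formulas and C-only formulas. -/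
inductive LaltCp {A : Type} : CFm A → Prop
  | alt {φ : CFm A} : PLAlt φ → LaltCp φ
  | conly {φ : CFm A} : Conly φ → LaltCp φ
  | neg {φ : CFm A} : LaltCp φ → LaltCp (.neg φ)
  | and {φ ψ : CFm A} : LaltCp φ → LaltCp ψ → LaltCp (.and φ ψ)

/-- The fragments C_{-a}: L_{-a} extended with the clause Cφ. -/
inductive CMinus {A : Type} : A → CFm A → Prop
  | atom (a : A) (n : ℕ) : CMinus a (.atom n)
  | box {a x : A} {ψ : CFm A} : x ≠ a → CMinus x ψ → CMinus a (.box x ψ)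
  | neg {a : A} {φ : CFm A} : CMinus a φ → CMinus a (.neg φ)
  | and {a : A} {φ ψ : CFm A} : CMinus a φ → CMinus a ψ → CMinus a (.and φ ψ)
  | cb {a : A} {φ : CFm A} : CMinus a φ → CMinus a (.cb φ)

/-- The fragment C_alt: L_alt extended with the clause Cφ. -/
inductive CAlt {A : Type} : CFm A → Prop
  | atom (n : ℕ) : CAlt (.atom n)
  | chi {φ : CFm A} (a : A) : CMinus a φ → CAlt φ
  | neg {φ : CFm A} : CAlt φ → CAlt (.neg φ)
  | and {φ ψ : CFm A} : CAlt φ → CAlt ψ → CAlt (.and φ ψ)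
  | cb {φ : CFm A} : CAlt φ → CAlt (.cb φ)

/-- Validity on all frames whose relations satisfy P. -/
def CValidOn {A : Type} (P : ∀ {W : Type}, (W → W → Prop) → Prop) (φ : CFm A) : Prop :=
  ∀ (W : Type) (M : Kripke A W), (∀ a : A, P (M.R a)) → ∀ w : W, CSat M w φ

-- auxiliary lemmas

lemma csat_verum {A W : Type} (M : Kripke A W) (w : W) : CSat M w CFm.verum := by
  simp [CFm.verum, CFm.bot, CSat]

lemma csat_conj {A W : Type} (M : Kripke A W) (w : W) (l : List (CFm A)) :
    CSat M w (CFm.conj l) ↔ ∀ φ ∈ l, CSat M w φ := by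
  induction l with
  | nil => simpa [CFm.conj] using csat_verum M w
  | cons φ l ih =>
    simp only [CFm.conj, List.foldr] at *
    constructor
    · rintro ⟨h1, h2⟩ ψ hψ
      rcases List.mem_cons.mp hψ with h | h
      · exact h ▸ h1
      · exact ih.mp h2 ψ h
    · intro h
      exact ⟨h φ (List.mem_cons_self), ih.mpr fun ψ hψ => h ψ (List.mem_cons_of_mem _ hψ)⟩

lemma calt_conj {A : Type} (l : List (CFm A)) (h : ∀ φ ∈ l, CAlt φ) :
    CAlt (CFm.conj l) := by
  induction l with
  | nil =>
    exact CAlt.neg (CAlt.and (CAlt.atom 0) (CAlt.neg (CAlt.atom 0)))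
  | cons φ l ih =>
    exact CAlt.and (h φ (List.mem_cons_self))
      (ih fun ψ hψ => h ψ (List.mem_cons_of_mem _ hψ))

section Main
variable {A : Type} [Fintype A] [DecidableEq A]

/-- Part 1: validity on serial transitive frames. -/
lemma part1 (a : A) :
    CValidOn (fun {W} (R : W → W → Prop) => Ser R ∧ Transitive R)
      (CFm.imp
        (.and
          (CFm.conj ((Finset.univ.erase a).toList.map fun b =>
            CFm.and (.box b (.atom 0))
              (.and (.cb (.box b (.atom 0)))
                (.and (.box b (.box a (.atom 0))) (.cb (.box b (.box a (.atom 0))))))))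
          (.box a (.atom 0)))
        (.cb (.atom 0))) := by
  intro W M hM w
  simp only [CFm.imp, CSat, not_and, not_not]
  rintro ⟨hconj, hbox⟩
  have htr : Transitive (M.R a) := (hM a).2
  -- extract the conjunct facts for each b ≠ a
  have hb : ∀ b : A, b ≠ a →
      CSat M w (CFm.and (.box b (.atom 0))
        (.and (.cb (.box b (.atom 0)))
          (.and (.box b (.box a (.atom 0))) (.cb (.box b (.box a (.atom 0))))))) := by
    intro b hne
    refine (csat_conj M w _).mp hconj _ ?_
    simp only [List.mem_map]
    exact ⟨b, by simp [Finset.mem_toList, Finset.mem_erase, hne], rfl⟩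
  have key : ∀ v, Relation.TransGen (fun x y => ∃ c : A, M.R c x y) w v →
      (M.V 0 v ∧ ∀ u, M.R a v u → M.V 0 u) := by
    intro v hv
    induction hv with
    | single h =>
      rename_i v
      obtain ⟨c, hc⟩ := h
      by_cases hca : c = a
      · subst hca
        exact ⟨hbox v hc, fun u hu => hbox u (htr hc hu)⟩
      · obtain ⟨h1, _, h3, _⟩ := hb c hca
        exact ⟨h1 v hc, h3 v hc⟩
    | tail hr h ih =>
      rename_i v u
      obtain ⟨c, hc⟩ := h
      by_cases hca : c = a
      · subst hca
        exact ⟨ih.2 u hc, fun x hx => ih.2 x (htr hc hx)⟩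
      · obtain ⟨_, h2, _, h4⟩ := hb c hca
        exact ⟨h2 v hr u hc, h4 v hr u hc⟩
  intro v hv
  exact (key v hv).1

/-- the counter-model relations -/
def Ra : Fin 4 → Fin 4 → Prop := fun x y =>
  (x = 0 ∧ y = 1) ∨ (x = 1 ∧ (y = 1 ∨ y = 2)) ∨ (x = 2 ∧ (y = 1 ∨ y = 2)) ∨ (x = 3 ∧ y = 3)

def Rb : Fin 4 → Fin 4 → Prop := fun _ y => y = 3

def CM (a : A) : Kripke A (Fin 4) :=
  ⟨fun c x y => if c = a then Ra x y else Rb x y, fun n w => n = 0 ∧ w ≠ 2⟩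

lemma part2 (a : A) :
    ¬ CValidOn (fun {W} (R : W → W → Prop) => Ser R)
      (CFm.imp
        (.and
          (CFm.conj ((Finset.univ.erase a).toList.map fun b =>
            CFm.and (.box b (.atom 0))
              (.and (.cb (.box b (.atom 0)))
                (.and (.box b (.box a (.atom 0))) (.cb (.box b (.box a (.atom 0))))))))
          (.box a (.atom 0)))
        (.cb (.atom 0))) := by
  intro hval
  have hser : ∀ c : A, Ser ((CM a).R c) := by
    intro c u
    by_cases hc : c = a
    · subst hc
      fin_cases u
      · exact ⟨1, by simp [CM, Ra]⟩
      · exact ⟨1, by simp [CM, Ra]⟩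
      · exact ⟨1, by simp [CM, Ra]⟩
      · exact ⟨3, by simp [CM, Ra]⟩
    · exact ⟨3, by simp [CM, Rb, hc]⟩
  have h := hval (Fin 4) (CM a) hser 0
  simp only [CFm.imp, CSat, not_and, not_not] at h
  -- helper: box_a p holds at 3
  have hRa : ∀ c x y, (CM a).R c x y → (c = a ∧ Ra x y) ∨ (c ≠ a ∧ y = 3) := by
    intro c x y hxy
    by_cases hc : c = a
    · left; refine ⟨hc, ?_⟩; simpa [CM, hc] using hxy
    · right; refine ⟨hc, ?_⟩; simpa [CM, hc, Rb] using hxy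
  have hboxa3 : ∀ u, (CM a).R a 3 u → (CM a).V 0 u := by
    intro u hu
    rcases hRa a 3 u hu with ⟨_, hr⟩ | ⟨hne, _⟩
    · rcases hr with ⟨h0, _⟩ | ⟨h0, _⟩ | ⟨h0, _⟩ | ⟨_, h1⟩ <;>
        first
        | exact absurd h0 (by decide)
        | (subst h1; exact ⟨rfl, by decide⟩)
    · exact absurd rfl hne
  -- the premise holds at 0
  have hprem : CSat (CM a) 0 (CFm.and
      (CFm.conj ((Finset.univ.erase a).toList.map fun b =>
        CFm.and (.box b (.atom 0))
          (.and (.cb (.box b (.atom 0)))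
            (.and (.box b (.box a (.atom 0))) (.cb (.box b (.box a (.atom 0))))))))
      (.box a (.atom 0))) := by
    constructor
    · rw [csat_conj]
      intro φ hφ
      simp only [List.mem_map] at hφ
      obtain ⟨b, hbmem, rfl⟩ := hφ
      have hbne : b ≠ a := by
        rw [Finset.mem_toList, Finset.mem_erase] at hbmem
        exact hbmem.1
      -- box_b p holds at every world, and box_b box_a p holds at every world
      have hbp : ∀ v u, (CM a).R b v u → (CM a).V 0 u := by
        intro v u hu
        rcases hRa b v u hu with ⟨hc, _⟩ | ⟨_, h3⟩
        · exact absurd hc hbne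
        · subst h3; exact ⟨rfl, by decide⟩
      have hbbp : ∀ v u, (CM a).R b v u → ∀ x, (CM a).R a u x → (CM a).V 0 x := by
        intro v u hu x hx
        rcases hRa b v u hu with ⟨hc, _⟩ | ⟨_, h3⟩
        · exact absurd hc hbne
        · subst h3; exact hboxa3 x hx
      exact ⟨fun u hu => hbp 0 u hu,
        fun v _ u hu => hbp v u hu,
        fun u hu x hx => hbbp 0 u hu x hx,
        fun v _ u hu x hx => hbbp v u hu x hx⟩
    · intro u hu
      rcases hRa a 0 u hu with ⟨_, hr⟩ | ⟨hne, _⟩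
      · rcases hr with ⟨_, h1⟩ | ⟨h0, _⟩ | ⟨h0, _⟩ | ⟨h0, _⟩ <;>
          first
          | exact absurd h0 (by decide)
          | (subst h1; exact ⟨rfl, by decide⟩)
      · exact absurd rfl hne
  have hC := h hprem
  -- but 2 is reachable from 0 and p fails at 2
  have step1 : (CM a).R a (0 : Fin 4) 1 := by simp [CM, Ra]
  have step2 : (CM a).R a (1 : Fin 4) 2 := by simp [CM, Ra]
  have hreach : Relation.TransGen (fun x y => ∃ c : A, (CM a).R c x y) (0 : Fin 4) 2 :=
    Relation.TransGen.head ⟨a, step1⟩ (Relation.TransGen.single ⟨a, step2⟩)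
  have := hC 2 hreach
  exact this.2 rfl

end Main

/-- the formula (⋀_{b≠a}(□_b p ∧ C□_b p ∧ □_b□_a p ∧ C□_b□_a p) ∧ □_a p) → Cp
is valid on serial transitive frames but not on serial frames; hence
CKD4 ∩ C_alt ⊄ CKD ∩ C_alt. -/
theorem stmt13 {A : Type} [Fintype A] [DecidableEq A] (hA : ∃ x y : A, x ≠ y) (a : A) :
    CValidOn (fun {W} (R : W → W → Prop) => Ser R ∧ Transitive R)
      (CFm.imp
        (.and
          (CFm.conj ((Finset.univ.erase a).toList.map fun b =>
            CFm.and (.box b (.atom 0))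
              (.and (.cb (.box b (.atom 0)))
                (.and (.box b (.box a (.atom 0))) (.cb (.box b (.box a (.atom 0))))))))
          (.box a (.atom 0)))
        (.cb (.atom 0))) ∧
    ¬ CValidOn (fun {W} (R : W → W → Prop) => Ser R)
      (CFm.imp
        (.and
          (CFm.conj ((Finset.univ.erase a).toList.map fun b =>
            CFm.and (.box b (.atom 0))
              (.and (.cb (.box b (.atom 0)))
                (.and (.box b (.box a (.atom 0))) (.cb (.box b (.box a (.atom 0))))))))
          (.box a (.atom 0)))
        (.cb (.atom 0))) ∧
    ∃ χ : CFm A, CAlt χ ∧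
      CValidOn (fun {W} (R : W → W → Prop) => Ser R ∧ Transitive R) χ ∧
      ¬ CValidOn (fun {W} (R : W → W → Prop) => Ser R) χ := by
  refine ⟨part1 a, part2 a, ?_⟩
  refine ⟨_, ?_, part1 a, part2 a⟩
  -- CAlt of the formula
  obtain ⟨x, y, hxy⟩ := hA
  obtain ⟨c, hc⟩ : ∃ c : A, c ≠ a := by
    by_cases hx : x = a
    · exact ⟨y, by rw [← hx]; exact hxy.symm⟩
    · exact ⟨x, hx⟩
  apply CAlt.neg
  apply CAlt.and
  · apply CAlt.and
    · apply calt_conj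
      intro φ hφ
      simp only [List.mem_map] at hφ
      obtain ⟨b, hbmem, rfl⟩ := hφ
      have hbne : b ≠ a := by
        rw [Finset.mem_toList, Finset.mem_erase] at hbmem
        exact hbmem.1
      refine CAlt.and ?_ (CAlt.and ?_ (CAlt.and ?_ ?_))
      · exact CAlt.chi a (CMinus.box hbne (CMinus.atom b 0))
      · exact CAlt.cb (CAlt.chi a (CMinus.box hbne (CMinus.atom b 0)))
      · exact CAlt.chi a (CMinus.box hbne (CMinus.box hbne.symm (CMinus.atom a 0)))
      · exact CAlt.cb (CAlt.chi a (CMinus.box hbne (CMinus.box hbne.symm (CMinus.atom a 0))))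
    · exact CAlt.chi c (CMinus.box (Ne.symm hc) (CMinus.atom a 0))
  · exact CAlt.neg (CAlt.cb (CAlt.atom 0))
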